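/- Let M, N, A, G be real n×n matrices with A = M − N, where M is an invertible diagonal matrix and G is a diagonal matrix whose diagonal entries are each 0 or 1. Let f, b ∈ ℝⁿ. If u* ∈ ℝⁿ is a fixed point of the update u ↦ G·(M⁻¹·N·u + M⁻¹·f) + (I − G)·b, i.e., u* = G·(M⁻¹·N·u* + M⁻¹·f) + (I − G)·b, then u* satisfies G·(A·u*) = G·f and (I − G)·u* = (I − G)·b. -/
import Mathlib


open Matrix Filter Topology

/-- Matrix-splitting fixed point proposition: if `A = M - N` with `M` an invertible
diagonal matrix and `G` a diagonal 0-1 "reset" matrix, then any fixed point `u*` of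
`u ↦ G·(M⁻¹·N·u + M⁻¹·f) + (I − G)·b` satisfies `G·(A·u*) = G·f` and
`(I − G)·u* = (I − G)·b`. -/
theorem matrix_splitting_fixed_point_solves_pde
    {n : ℕ} (M N A G : Matrix (Fin n) (Fin n) ℝ)
    (hA : A = M - N)
    (hMdiag : M.IsDiag) (hMunit : IsUnit M)
    (hGdiag : G.IsDiag) (hG01 : ∀ i, G i i = 0 ∨ G i i = 1)
    (f b uStar : Fin n → ℝ)
    (hfix : uStar =
      G.mulVec (M⁻¹.mulVec (N.mulVec uStar) + M⁻¹.mulVec f) + (1 - G).mulVec b) :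
    G.mulVec (A.mulVec uStar) = G.mulVec f ∧
    (1 - G).mulVec uStar = (1 - G).mulVec b := by
  have hM : diagonal M.diag = M := hMdiag.diagonal_diag
  have hG : diagonal G.diag = G := hGdiag.diagonal_diag
  have hdet : M.det ≠ 0 := by
    simpa [Matrix.isUnit_iff_isUnit_det, isUnit_iff_ne_zero] using hMunit
  have hdne : ∀ i, M i i ≠ 0 := by
    intro i
    rw [← hM, Matrix.det_diagonal] at hdet
    intro h
    exact hdet (Finset.prod_eq_zero (Finset.mem_univ i) h)
  have hMinv : M⁻¹ = diagonal (fun i => (M i i)⁻¹) := by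
    apply Matrix.inv_eq_right_inv
    ext i j
    rw [Matrix.mul_diagonal]
    rcases eq_or_ne i j with rfl | hij
    · simp [mul_inv_cancel₀ (hdne i)]
    · simp [hMdiag hij, Matrix.one_apply_ne hij]
  -- entrywise actions of the diagonal matrices
  have hGv : ∀ (v : Fin n → ℝ) i, G.mulVec v i = G i i * v i := by
    intro v i
    conv_lhs => rw [← hG]
    simp [Matrix.mulVec_diagonal]
  have hMv : ∀ (v : Fin n → ℝ) i, M.mulVec v i = M i i * v i := by
    intro v i
    conv_lhs => rw [← hM]
    simp [Matrix.mulVec_diagonal]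
  have hMiv : ∀ (v : Fin n → ℝ) i, M⁻¹.mulVec v i = (M i i)⁻¹ * v i := by
    intro v i
    rw [hMinv]
    simp [Matrix.mulVec_diagonal]
  -- the fixed point equation, entrywise
  have hfixi : ∀ i, uStar i =
      G i i * ((M i i)⁻¹ * N.mulVec uStar i + (M i i)⁻¹ * f i)
        + (b i - G i i * b i) := by
    intro i
    conv_lhs => rw [hfix]
    simp only [Pi.add_apply, Matrix.sub_mulVec, Matrix.one_mulVec, Pi.sub_apply]
    rw [hGv, hGv]
    simp only [Pi.add_apply, hMiv]
  constructor
  · funext i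
    rw [hGv, hGv, hA, Matrix.sub_mulVec]
    rcases hG01 i with h0 | h1
    · simp [h0]
    · have h := hfixi i
      rw [h1] at h
      simp only [one_mul, sub_self, add_zero] at h
      have hMi : M i i * uStar i = N.mulVec uStar i + f i := by
        rw [h, mul_add, ← mul_assoc, ← mul_assoc, mul_inv_cancel₀ (hdne i),
          one_mul, one_mul]
      simp only [Pi.sub_apply, hMv, h1, one_mul]
      rw [hMi]; ring
  · funext i
    simp only [Matrix.sub_mulVec, Matrix.one_mulVec, Pi.sub_apply]
    rw [hGv, hGv]
    rcases hG01 i with h0 | h1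
    · have h := hfixi i
      rw [h0] at h
      simp only [zero_mul, zero_add, sub_zero] at h
      simp [h, h0]
    · simp [h1]
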